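/- For every $w \in S_+$, the Schubert cancellation identity holds: $\sum_{(u,v)} (-1)^{\ell(u)} \mathfrak{S}_{u^{-1}}(a) \mathfrak{S}_v(a) = \delta_{w, \mathrm{id}}$, where the sum is over all pairs $(u,v)$ with $w = uv$ and $\ell(w) = \ell(u) + \ell(v)$, and both Schubert polynomials are evaluated in the same variable set $a$. -/

import Mathlib

open MvPolynomial

/-- The group `S₊` of permutations of `ℕ` moving only finitely many elements
(the positive integers are relabeled `0, 1, 2, …`). -/
def SPlus : Subgroup (Equiv.Perm ℕ) where
  carrier := {w | {i : ℕ | w i ≠ i}.Finite}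
  one_mem' := by
    have h : {i : ℕ | (1 : Equiv.Perm ℕ) i ≠ i} = ∅ := by ext i; simp
    show ({i : ℕ | (1 : Equiv.Perm ℕ) i ≠ i}).Finite
    rw [h]; exact Set.finite_empty
  mul_mem' := by
    intro a b ha hb
    show ({i : ℕ | (a * b) i ≠ i}).Finite
    refine (Set.Finite.union ha hb).subset ?_
    intro j hj
    simp only [Set.mem_setOf_eq] at hj
    by_contra hc
    simp only [Set.mem_union, Set.mem_setOf_eq, not_or, not_not] at hc
    exact hj (by rw [Equiv.Perm.mul_apply, hc.2, hc.1])
  inv_mem' := by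
    intro a ha
    show ({i : ℕ | a⁻¹ i ≠ i}).Finite
    have h : {i : ℕ | a⁻¹ i ≠ i} = {i : ℕ | a i ≠ i} := by
      ext i
      simp only [Set.mem_setOf_eq, ne_eq, Equiv.Perm.inv_eq_iff_eq]
      exact not_congr eq_comm
    rw [h]; exact ha

/-- The simple transposition `s_i = (i, i+1)` as an element of `S₊`. -/
def sN (i : ℕ) : SPlus :=
  ⟨Equiv.swap i (i + 1), by
    show ({j : ℕ | Equiv.swap i (i + 1) j ≠ j}).Finite
    refine ((Set.finite_singleton (i + 1)).insert i).subset ?_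
    intro j hj
    simp only [Set.mem_setOf_eq] at hj
    by_contra hc
    simp only [Set.mem_insert_iff, Set.mem_singleton_iff, not_or] at hc
    exact hj (Equiv.swap_apply_of_ne_of_ne hc.1 hc.2)⟩

/-- Coxeter length = number of inversions. -/
noncomputable def lenS (w : SPlus) : ℕ :=
  Nat.card {p : ℕ × ℕ | p.1 < p.2 ∧ (w : Equiv.Perm ℕ) p.2 < (w : Equiv.Perm ℕ) p.1}

/-- The defining properties of the family of Schubert polynomials `𝔖_w`, `w ∈ S₊`:
`𝔖_id = 1`; `𝔖_w` is homogeneous of degree `ℓ(w)`; and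
`A_i 𝔖_w = 𝔖_{w sᵢ}` if `ℓ(w sᵢ) < ℓ(w)` and `A_i 𝔖_w = 0` otherwise, where the
divided difference relations are expressed via
`(x_i - x_{i+1}) 𝔖_{w sᵢ} = 𝔖_w - s_i 𝔖_w` resp. `s_i 𝔖_w = 𝔖_w`. -/
def SchubertFamily (S : SPlus → MvPolynomial ℕ ℚ) : Prop :=
  S 1 = 1 ∧
  (∀ w : SPlus, (S w).IsHomogeneous (lenS w)) ∧
  (∀ (w : SPlus) (i : ℕ),
    if lenS (w * sN i) < lenS w then
      (X i - X (i + 1)) * S (w * sN i)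
        = S w - rename (fun j => Equiv.swap i (i + 1) j) (S w)
    else rename (fun j => Equiv.swap i (i + 1) j) (S w) = S w)

namespace SchubAux

open Equiv

/-- Inversion set of a permutation of `ℕ`. -/
def Inv (w : Equiv.Perm ℕ) : Set (ℕ × ℕ) := {p | p.1 < p.2 ∧ w p.2 < w p.1}

lemma lenS_eq (w : SPlus) : lenS w = (Inv (w : Equiv.Perm ℕ)).ncard := by
  rw [lenS, Inv, Nat.card_coe_set_eq]

lemma sN_coe (i : ℕ) : ((sN i : SPlus) : Equiv.Perm ℕ) = Equiv.swap i (i + 1) := rfl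

lemma mul_coe_apply (u v : SPlus) (a : ℕ) :
    ((u * v : SPlus) : Equiv.Perm ℕ) a = (u : Equiv.Perm ℕ) ((v : Equiv.Perm ℕ) a) := rfl

lemma sN_mul_self (i : ℕ) : sN i * sN i = 1 :=
  Subtype.ext (Equiv.swap_mul_self i (i + 1))

lemma sN_inv (i : ℕ) : (sN i)⁻¹ = sN i := by
  rw [inv_eq_iff_mul_eq_one, sN_mul_self]

/-- There is a bound beyond which `w` acts as the identity. -/
lemma exists_bound (w : SPlus) : ∃ B : ℕ, ∀ j, B < j → (w : Equiv.Perm ℕ) j = j := by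
  obtain ⟨B, hB⟩ := (w.2 : {i : ℕ | (w : Equiv.Perm ℕ) i ≠ i}.Finite).bddAbove
  exact ⟨B, fun j hj => by
    by_contra hc
    exact absurd (hB (Set.mem_setOf_eq ▸ hc : j ∈ _)) (not_le.mpr hj)⟩

lemma Inv_bound (w : SPlus) : ∃ B : ℕ,
    Inv (w : Equiv.Perm ℕ) ⊆ Set.Iic B ×ˢ Set.Iic B := by
  obtain ⟨B, hB⟩ := exists_bound w
  refine ⟨B, ?_⟩
  rintro ⟨a, b⟩ ⟨hab, hw⟩
  simp only [Set.mem_prod, Set.mem_Iic]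
  have hb : b ≤ B := by
    by_contra hc
    push_neg at hc
    have hfb := hB b hc
    -- w b = b, and w b < w a, so b < w a; then w a > B so w a is fixed
    have h1 : b < (w : Equiv.Perm ℕ) a := by rwa [hfb] at hw
    have h2 : B < (w : Equiv.Perm ℕ) a := lt_trans hc h1
    have h3 := hB _ h2
    have h4 : (w : Equiv.Perm ℕ) a = a := (w : Equiv.Perm ℕ).injective h3
    omega
  exact ⟨le_trans (le_of_lt hab) hb, hb⟩

lemma Inv_finite (w : SPlus) : (Inv (w : Equiv.Perm ℕ)).Finite := by
  obtain ⟨B, hB⟩ := Inv_bound w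
  exact (Set.Finite.prod (Set.finite_Iic B) (Set.finite_Iic B)).subset hB

/-- A maximal moved point gives an inversion. -/
lemma exists_inversion (w : SPlus) (hw : w ≠ 1) :
    ∃ a b : ℕ, (a, b) ∈ Inv (w : Equiv.Perm ℕ) ∧
      ∀ j, (w : Equiv.Perm ℕ) j ≠ j → j ≤ b := by
  set W := (w : Equiv.Perm ℕ) with hW
  have hne : {i : ℕ | W i ≠ i}.Nonempty := by
    by_contra hc
    rw [Set.not_nonempty_iff_eq_empty] at hc
    apply hw
    apply Subtype.ext
    apply Equiv.ext
    intro j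
    by_contra hj
    exact absurd (Set.eq_empty_iff_forall_notMem.mp hc j) (by simpa using hj)
  obtain ⟨k, hk, hkmax⟩ := Set.Finite.exists_maximalFor id _ w.2 hne
  simp only [Set.mem_setOf_eq, id] at hk hkmax
  have hmax : ∀ j, W j ≠ j → j ≤ k := by
    intro j hj
    by_contra hc
    push_neg at hc
    exact absurd (hkmax hj (le_of_lt hc)) (by omega)
  have hWk : W k < k := by
    rcases lt_trichotomy (W k) k with h | h | h
    · exact h
    · exact absurd h hk
    · -- W k > k, then W k is fixed, so W (W k) = W k, injective gives k = W k
      have : W (W k) = W k := by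
        by_contra hc
        exact absurd (hmax _ hc) (by omega)
      exact absurd (W.injective this) (by omega)
  refine ⟨W⁻¹ k, k, ⟨?_, ?_⟩, hmax⟩
  · -- W⁻¹ k < k
    have h1 : W (W⁻¹ k) = k := W.apply_symm_apply k
    have h2 : W⁻¹ k ≠ k := by
      intro hc; rw [hc] at h1; omega
    rcases lt_or_gt_of_ne h2 with h | h
    · exact h
    · have : W (W⁻¹ k) = W⁻¹ k := by
        by_contra hc
        exact absurd (hmax _ hc) (by omega)
      rw [h1] at this; omega
  · show W k < W (W⁻¹ k)
    rw [Equiv.Perm.inv_def, W.apply_symm_apply]; exact hWk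

lemma lenS_one : lenS (1 : SPlus) = 0 := by
  rw [lenS_eq]
  convert Set.ncard_empty (ℕ × ℕ)
  rw [Set.eq_empty_iff_forall_notMem]
  rintro ⟨a, b⟩ ⟨hab, hw⟩
  simp only [OneMemClass.coe_one, Equiv.Perm.coe_one, id] at hw
  omega

lemma lenS_pos (w : SPlus) (hw : w ≠ 1) : 0 < lenS w := by
  obtain ⟨a, b, hab, -⟩ := exists_inversion w hw
  rw [lenS_eq]
  exact (Set.ncard_pos (Inv_finite w)).mpr ⟨(a, b), hab⟩

lemma eq_one_of_lenS_eq_zero (w : SPlus) (hw : lenS w = 0) : w = 1 := by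
  by_contra hc
  exact absurd hw (Nat.pos_iff_ne_zero.mp (lenS_pos w hc))

/-- Order-preservation of the swap away from the pair `(i, i+1)`. -/
lemma swap_lt {i a b : ℕ} (hab : a < b) (hne : ¬(a = i ∧ b = i + 1)) :
    Equiv.swap i (i + 1) a < Equiv.swap i (i + 1) b := by
  rw [Equiv.swap_apply_def, Equiv.swap_apply_def]
  split_ifs <;> omega

end SchubAux
namespace SchubAux

open Equiv

lemma lenS_mul_sN_of_asc (w : SPlus) (i : ℕ)
    (h : (w : Equiv.Perm ℕ) i < (w : Equiv.Perm ℕ) (i + 1)) :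
    lenS (w * sN i) = lenS w + 1 := by
  set W := (w : Equiv.Perm ℕ) with hW
  set s := Equiv.swap i (i + 1) with hs
  have hws : ((w * sN i : SPlus) : Equiv.Perm ℕ) = W * s := rfl
  have happ : ∀ a, ((w * sN i : SPlus) : Equiv.Perm ℕ) a = W (s a) := fun a => rfl
  set e : ℕ × ℕ → ℕ × ℕ := fun p => (s p.1, s p.2) with he
  have hinj : Function.Injective e := by
    intro p q hpq
    simp only [he, Prod.mk.injEq] at hpq
    exact Prod.ext (s.injective hpq.1) (s.injective hpq.2)
  have hset : Inv ((w * sN i : SPlus) : Equiv.Perm ℕ)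
      = insert (i, i + 1) (e '' Inv W) := by
    ext ⟨a, b⟩
    constructor
    · rintro ⟨hab, hv⟩
      simp only at hab
      rw [happ, happ] at hv
      by_cases hcase : a = i ∧ b = i + 1
      · left; simp [hcase.1, hcase.2]
      · right
        simp only at hv
        refine ⟨(s a, s b), ⟨swap_lt hab hcase, hv⟩, ?_⟩
        show (s (s a), s (s b)) = (a, b)
        rw [Equiv.swap_apply_self, Equiv.swap_apply_self]
    · rintro (hmem | ⟨⟨c, d⟩, ⟨hcd, hv⟩, him⟩)
      · rw [Prod.ext_iff] at hmem
        simp only at hmem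
        obtain ⟨rfl, rfl⟩ := hmem
        refine ⟨Nat.lt_succ_self _, ?_⟩
        rw [happ, happ, Equiv.swap_apply_right, Equiv.swap_apply_left]
        exact h
      · simp only [he, Prod.mk.injEq] at him
        obtain ⟨hc, hd⟩ := him
        subst hc; subst hd
        have hne : ¬(c = i ∧ d = i + 1) := by
          rintro ⟨rfl, rfl⟩
          exact absurd h (not_lt.mpr (le_of_lt hv))
        refine ⟨swap_lt hcd hne, ?_⟩
        rw [happ, happ, Equiv.swap_apply_self, Equiv.swap_apply_self]
        exact hv
  have hnm : (i, i + 1) ∉ e '' Inv W := by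
    rintro ⟨⟨c, d⟩, ⟨hcd, -⟩, him⟩
    simp only [he, Prod.mk.injEq] at him
    have h1 : c = s i := by rw [← him.1, Equiv.swap_apply_self]
    have h2 : d = s (i + 1) := by rw [← him.2, Equiv.swap_apply_self]
    rw [Equiv.swap_apply_left] at h1
    rw [Equiv.swap_apply_right] at h2
    omega
  rw [lenS_eq, lenS_eq, hset,
    Set.ncard_insert_of_notMem hnm ((Inv_finite w).image e),
    Set.ncard_image_of_injective _ hinj]


lemma lenS_mul_sN_of_desc (w : SPlus) (i : ℕ)
    (h : (w : Equiv.Perm ℕ) (i + 1) < (w : Equiv.Perm ℕ) i) :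
    lenS w = lenS (w * sN i) + 1 := by
  have key := lenS_mul_sN_of_asc (w * sN i) i (by
    show (w : Equiv.Perm ℕ) (Equiv.swap i (i+1) i) < (w : Equiv.Perm ℕ) (Equiv.swap i (i+1) (i+1))
    rwa [Equiv.swap_apply_left, Equiv.swap_apply_right])
  rwa [mul_assoc, sN_mul_self, mul_one] at key

lemma lenS_mul_sN_dichotomy (w : SPlus) (i : ℕ) :
    lenS (w * sN i) = lenS w + 1 ∨ lenS w = lenS (w * sN i) + 1 := by
  rcases lt_trichotomy ((w : Equiv.Perm ℕ) i) ((w : Equiv.Perm ℕ) (i+1)) with h | h | h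
  · exact Or.inl (lenS_mul_sN_of_asc w i h)
  · exact absurd ((w : Equiv.Perm ℕ).injective h) (by omega)
  · exact Or.inr (lenS_mul_sN_of_desc w i h)

lemma descent_iff (w : SPlus) (i : ℕ) :
    lenS (w * sN i) < lenS w ↔ (w : Equiv.Perm ℕ) (i + 1) < (w : Equiv.Perm ℕ) i := by
  constructor
  · intro hlt
    rcases lt_trichotomy ((w : Equiv.Perm ℕ) i) ((w : Equiv.Perm ℕ) (i+1)) with h | h | h
    · have := lenS_mul_sN_of_asc w i h; omega
    · exact absurd ((w : Equiv.Perm ℕ).injective h) (by omega)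
    · exact h
  · intro h
    have := lenS_mul_sN_of_desc w i h; omega

lemma lenS_of_descent (w : SPlus) (i : ℕ) (h : lenS (w * sN i) < lenS w) :
    lenS w = lenS (w * sN i) + 1 :=
  lenS_mul_sN_of_desc w i ((descent_iff w i).mp h)

lemma lenS_of_ascent (w : SPlus) (i : ℕ) (h : ¬ lenS (w * sN i) < lenS w) :
    lenS (w * sN i) = lenS w + 1 := by
  rcases lenS_mul_sN_dichotomy w i with h1 | h1
  · exact h1
  · omega

lemma lenS_inv (w : SPlus) : lenS w⁻¹ = lenS w := by
  rw [lenS_eq, lenS_eq]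
  set W := (w : Equiv.Perm ℕ) with hW
  have hWi : ((w⁻¹ : SPlus) : Equiv.Perm ℕ) = W⁻¹ := rfl
  rw [hWi]
  have himg : Inv W⁻¹ = (fun p : ℕ × ℕ => (W p.2, W p.1)) '' Inv W := by
    ext ⟨c, d⟩
    constructor
    · rintro ⟨hcd, hv⟩
      simp only at hcd hv
      refine ⟨(W⁻¹ d, W⁻¹ c), ⟨hv, ?_⟩, ?_⟩
      · show W (W⁻¹ c) < W (W⁻¹ d)
        rwa [Equiv.Perm.inv_def, Equiv.apply_symm_apply, Equiv.apply_symm_apply]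
      · show (W (W⁻¹ c), W (W⁻¹ d)) = (c, d)
        rw [Equiv.Perm.inv_def, Equiv.apply_symm_apply, Equiv.apply_symm_apply]
    · rintro ⟨⟨a, b⟩, ⟨hab, hv⟩, him⟩
      simp only [Prod.mk.injEq] at him
      obtain ⟨rfl, rfl⟩ := him
      refine ⟨hv, ?_⟩
      show W⁻¹ (W a) < W⁻¹ (W b)
      rwa [Equiv.Perm.inv_def, Equiv.symm_apply_apply, Equiv.symm_apply_apply]
  rw [himg, Set.ncard_image_of_injective _ ?_]
  intro p q hpq
  simp only [Prod.mk.injEq] at hpq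
  exact Prod.ext (W.injective hpq.2) (W.injective hpq.1)

lemma exists_descent (w : SPlus) (hw : w ≠ 1) :
    ∃ i, (w : Equiv.Perm ℕ) (i + 1) < (w : Equiv.Perm ℕ) i := by
  by_contra hc
  push_neg at hc
  have hmono : StrictMono (w : Equiv.Perm ℕ) := by
    apply strictMono_nat_of_lt_succ
    intro n
    have h1 := hc n
    have h2 : (w : Equiv.Perm ℕ) n ≠ (w : Equiv.Perm ℕ) (n + 1) := by
      intro h; exact absurd ((w : Equiv.Perm ℕ).injective h) (by omega)
    omega
  apply hw
  apply Subtype.ext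
  apply Equiv.ext
  intro n
  induction n using Nat.strong_induction_on with
  | _ n ih =>
    obtain ⟨m, hm⟩ := (w : Equiv.Perm ℕ).surjective n
    have h1 : ∀ k < n, (w : Equiv.Perm ℕ) k = k := fun k hk => ih k hk
    have h2 : m ≤ (w : Equiv.Perm ℕ) m := hmono.le_apply
    have h3 : n ≤ m := by
      by_contra hcon
      push_neg at hcon
      rw [h1 m hcon] at hm
      omega
    rw [hm] at h2
    have : m = n := le_antisymm h2 h3
    rw [← this, hm]
    simp [this]

lemma exists_descent_len (w : SPlus) (hw : w ≠ 1) :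
    ∃ i, lenS (w * sN i) < lenS w := by
  obtain ⟨i, hi⟩ := exists_descent w hw
  exact ⟨i, (descent_iff w i).mpr hi⟩

lemma lenS_mul_sN_le (w : SPlus) (i : ℕ) : lenS (w * sN i) ≤ lenS w + 1 := by
  rcases lenS_mul_sN_dichotomy w i with h | h <;> omega

-- left versions
lemma lenS_sN_mul_eq (w : SPlus) (i : ℕ) : lenS (sN i * w) = lenS (w⁻¹ * sN i) := by
  have : (w⁻¹ * sN i)⁻¹ = sN i * w := by rw [mul_inv_rev, sN_inv, inv_inv]
  rw [← this, lenS_inv]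

lemma lenS_sN_mul_dichotomy (w : SPlus) (i : ℕ) :
    lenS (sN i * w) = lenS w + 1 ∨ lenS w = lenS (sN i * w) + 1 := by
  rw [lenS_sN_mul_eq, ← lenS_inv w]
  exact lenS_mul_sN_dichotomy w⁻¹ i

lemma lenS_of_left_descent (w : SPlus) (i : ℕ) (h : lenS (sN i * w) < lenS w) :
    lenS w = lenS (sN i * w) + 1 := by
  rcases lenS_sN_mul_dichotomy w i with h1 | h1 <;> omega

lemma left_descent_iff (w : SPlus) (i : ℕ) :
    lenS (sN i * w) < lenS w ↔ ((w : Equiv.Perm ℕ))⁻¹ (i + 1) < ((w : Equiv.Perm ℕ))⁻¹ i := by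
  rw [lenS_sN_mul_eq, ← lenS_inv w]
  exact descent_iff w⁻¹ i

lemma lenS_mul_le (u v : SPlus) : lenS (u * v) ≤ lenS u + lenS v := by
  generalize hn : lenS v = n
  induction n using Nat.strong_induction_on generalizing v u with
  | _ n ih =>
    by_cases hv : v = 1
    · subst hv; rw [mul_one]; simp [lenS_one]
    · obtain ⟨i, hi⟩ := exists_descent_len v hv
      have h1 : lenS v = lenS (v * sN i) + 1 := lenS_of_descent v i hi
      have h2 : u * v = (u * (v * sN i)) * sN i := by
        rw [mul_assoc, mul_assoc, sN_mul_self, mul_one]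
      calc lenS (u * v) = lenS ((u * (v * sN i)) * sN i) := by rw [← h2]
        _ ≤ lenS (u * (v * sN i)) + 1 := lenS_mul_sN_le _ i
        _ ≤ lenS u + lenS (v * sN i) + 1 := by
            have := ih (lenS (v * sN i)) (by omega) u (v * sN i) rfl
            omega
        _ = lenS u + lenS v := by omega
      omega

end SchubAux
namespace SchubAux

open Equiv

lemma Inv_sN_mul_subset (w : SPlus) (i : ℕ) (h : lenS (sN i * w) < lenS w) :
    Inv ((sN i * w : SPlus) : Equiv.Perm ℕ) ⊆ Inv (w : Equiv.Perm ℕ) := by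
  have hd := (left_descent_iff w i).mp h
  set W := (w : Equiv.Perm ℕ) with hW
  rintro ⟨a, b⟩ ⟨hab, hv⟩
  simp only at hab
  have hv' : Equiv.swap i (i+1) (W b) < Equiv.swap i (i+1) (W a) := hv
  refine ⟨hab, ?_⟩
  show W b < W a
  rcases lt_trichotomy (W a) (W b) with hc | hc | hc
  · by_cases hex : W a = i ∧ W b = i + 1
    · have ha : a = W⁻¹ i := by rw [← hex.1, Equiv.Perm.inv_def, Equiv.symm_apply_apply]
      have hb : b = W⁻¹ (i+1) := by rw [← hex.2, Equiv.Perm.inv_def, Equiv.symm_apply_apply]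
      omega
    · exact absurd (swap_lt hc hex) (by omega)
  · exact absurd (W.injective hc) (by
      intro hc2; omega)
  · exact hc

lemma additive_inv_subset (w u v : SPlus) (h1 : w = u * v)
    (h2 : lenS w = lenS u + lenS v) :
    Inv (v : Equiv.Perm ℕ) ⊆ Inv (w : Equiv.Perm ℕ) := by
  generalize hn : lenS u = n
  induction n using Nat.strong_induction_on generalizing u w with
  | _ n ih =>
    by_cases hu : u = 1
    · subst hu; rw [one_mul] at h1; subst h1; exact subset_rfl
    · have hui : u⁻¹ ≠ 1 := by simpa using hu
      obtain ⟨i, hi⟩ := exists_descent_len u⁻¹ hui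
      have hld : lenS (sN i * u) < lenS u := by
        rw [lenS_sN_mul_eq, ← lenS_inv u]; exact hi
      have h3 : lenS u = lenS (sN i * u) + 1 := lenS_of_left_descent u i hld
      have h4 : sN i * w = (sN i * u) * v := by rw [h1, mul_assoc]
      have h5 : lenS (sN i * w) ≤ lenS (sN i * u) + lenS v := h4 ▸ lenS_mul_le _ _
      have h6 : lenS w ≤ lenS (sN i * w) + 1 := by
        rcases lenS_sN_mul_dichotomy w i with hh | hh <;> omega
      have h7 : lenS (sN i * w) = lenS (sN i * u) + lenS v := by omega
      have h8 : lenS (sN i * w) < lenS w := by omega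
      exact subset_trans
        (ih (lenS (sN i * u)) (by omega) (sN i * w) (sN i * u) h4 h7 rfl)
        (Inv_sN_mul_subset w i h8)

lemma mem_fix_of_inv_subset (w v : SPlus) (B : ℕ)
    (hB : Inv (w : Equiv.Perm ℕ) ⊆ Set.Iic B ×ˢ Set.Iic B)
    (hsub : Inv (v : Equiv.Perm ℕ) ⊆ Inv (w : Equiv.Perm ℕ)) :
    ∀ j, B < j → (v : Equiv.Perm ℕ) j = j := by
  intro j hj
  by_contra hc
  have hv1 : v ≠ 1 := by
    intro h; subst h; exact hc rfl
  obtain ⟨a, b, hab, hmax⟩ := exists_inversion v hv1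
  have h1 : j ≤ b := hmax j hc
  have h2 := hB (hsub hab)
  simp only [Set.mem_prod, Set.mem_Iic] at h2
  omega

lemma finite_fixset (B : ℕ) :
    {v : SPlus | ∀ j, B < j → (v : Equiv.Perm ℕ) j = j}.Finite := by
  rw [← Set.finite_coe_iff]
  have hle : ∀ (v : ↥{v : SPlus | ∀ j, B < j → (v : Equiv.Perm ℕ) j = j})
      (j : Set.Iic B), ((v : SPlus) : Equiv.Perm ℕ) j ∈ Set.Iic B := by
    rintro ⟨v, hv⟩ ⟨j, hjB⟩
    simp only [Set.mem_Iic] at hjB ⊢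
    by_contra hcon
    push_neg at hcon
    have h1 : (v : Equiv.Perm ℕ) ((v : Equiv.Perm ℕ) j) = (v : Equiv.Perm ℕ) j :=
      hv _ hcon
    have h2 := (v : Equiv.Perm ℕ).injective h1
    omega
  have : Function.Injective
      (fun (v : ↥{v : SPlus | ∀ j, B < j → (v : Equiv.Perm ℕ) j = j})
        (j : Set.Iic B) => (⟨((v : SPlus) : Equiv.Perm ℕ) j, hle v j⟩ : Set.Iic B)) := by
    rintro ⟨v, hv⟩ ⟨v', hv'⟩ hvv
    have hj : ∀ j : ℕ, (v : Equiv.Perm ℕ) j = (v' : Equiv.Perm ℕ) j := by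
      intro j
      by_cases hjB : j ≤ B
      · have h5 := congr_fun hvv ⟨j, hjB⟩
        simpa using h5
      · push_neg at hjB
        rw [hv j hjB, hv' j hjB]
    apply Subtype.ext
    apply Subtype.ext
    exact Equiv.ext hj
  exact Finite.of_injective _ this

def Fset (w : SPlus) : Set (SPlus × SPlus) :=
  {p | w = p.1 * p.2 ∧ lenS w = lenS p.1 + lenS p.2}

lemma Fset_finite (w : SPlus) : (Fset w).Finite := by
  obtain ⟨B, hB⟩ := Inv_bound w
  have h1 : Fset w ⊆ (fun v : SPlus => (w * v⁻¹, v)) ''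
      {v : SPlus | ∀ j, B < j → (v : Equiv.Perm ℕ) j = j} := by
    rintro ⟨u, v⟩ ⟨hw, hlen⟩
    refine ⟨v, mem_fix_of_inv_subset w v B hB (additive_inv_subset w u v hw hlen), ?_⟩
    have : w * v⁻¹ = u := by rw [hw, mul_assoc, mul_inv_cancel, mul_one]
    simp [this]
  exact ((finite_fixset B).image _).subset h1

end SchubAux
namespace SchubAux

open MvPolynomial

/-- The swap `i ↔ i+1` as a function on variable indices. -/
abbrev sp (i : ℕ) : ℕ → ℕ := fun j => Equiv.swap i (i + 1) j

lemma sp_injective (i : ℕ) : Function.Injective (sp i) :=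
  (Equiv.swap i (i + 1)).injective

lemma rename_sp_sp (i : ℕ) (P : MvPolynomial ℕ ℚ) :
    rename (sp i) (rename (sp i) P) = P := by
  rw [rename_rename]
  have h : (sp i ∘ sp i) = id := funext (fun j => Equiv.swap_apply_self _ _ _)
  rw [h, rename_id_apply]

/-- A polynomial invariant under all adjacent transpositions which is homogeneous of
positive degree is zero. -/
lemma eq_zero_of_symmetric (P : MvPolynomial ℕ ℚ) (n : ℕ) (hn : 0 < n)
    (hh : P.IsHomogeneous n)
    (hsym : ∀ i, rename (sp i) P = P) : P = 0 := by
  by_contra hP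
  have hsupp : P.support.Nonempty := support_nonempty.mpr hP
  set N := P.support.sup (fun d => d.support.sup id) with hN
  obtain ⟨d, hd, hdN⟩ :=
    Finset.exists_mem_eq_sup P.support hsupp (fun d => d.support.sup id)
  have hdne : d.support.Nonempty := by
    rw [Finsupp.support_nonempty_iff]
    intro h0
    have h1 := hh (mem_support_iff.mp hd)
    rw [h0] at h1
    simp at h1
    omega
  have hNmem : N ∈ d.support := by
    have h1 : d.support.max' hdne ∈ d.support := d.support.max'_mem hdne
    rwa [Finset.max'_eq_sup' , Finset.sup'_eq_sup, ← hdN] at h1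
  have hco : coeff (Finsupp.mapDomain (sp N) d) (rename (sp N) P) = coeff d P :=
    coeff_rename_mapDomain _ (sp_injective N) P d
  rw [hsym N] at hco
  have hd' : Finsupp.mapDomain (sp N) d ∈ P.support := by
    rw [mem_support_iff, hco]; exact mem_support_iff.mp hd
  have hle : (Finsupp.mapDomain (sp N) d).support.sup id ≤ N :=
    Finset.le_sup (f := fun d => d.support.sup id) hd'
  have hmem : N + 1 ∈ (Finsupp.mapDomain (sp N) d).support := by
    rw [Finsupp.mem_support_iff]
    have h2 : Finsupp.mapDomain (sp N) d (sp N N) = d N :=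
      Finsupp.mapDomain_apply (sp_injective N) d N
    rw [show sp N N = N + 1 from Equiv.swap_apply_left N (N+1)] at h2
    rw [h2]
    exact Finsupp.mem_support_iff.mp hNmem
  have h3 : N + 1 ≤ N := le_trans (Finset.le_sup (f := id) hmem) hle
  omega

end SchubAux
namespace SchubAux

open MvPolynomial

noncomputable def Gsum (S : SPlus → MvPolynomial ℕ ℚ) (w : SPlus) : MvPolynomial ℕ ℚ :=
  ∑ᶠ p ∈ Fset w, (-1 : MvPolynomial ℕ ℚ) ^ lenS p.1 * S p.1⁻¹ * S p.2

lemma Gsum_eq_sum (S : SPlus → MvPolynomial ℕ ℚ) (w : SPlus) :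
    Gsum S w = ∑ p ∈ (Fset_finite w).toFinset,
      (-1 : MvPolynomial ℕ ℚ) ^ lenS p.1 * S p.1⁻¹ * S p.2 := by
  rw [Gsum, ← finsum_mem_coe_finset, Set.Finite.coe_toFinset]

lemma Fset_one : Fset (1 : SPlus) = {((1 : SPlus), (1 : SPlus))} := by
  ext ⟨u, v⟩
  simp only [Fset, Set.mem_setOf_eq, Set.mem_singleton_iff, Prod.mk.injEq]
  constructor
  · rintro ⟨h1, h2⟩
    rw [lenS_one] at h2
    exact ⟨eq_one_of_lenS_eq_zero u (by omega), eq_one_of_lenS_eq_zero v (by omega)⟩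
  · rintro ⟨rfl, rfl⟩
    simp [lenS_one]

lemma Gsum_one (S : SPlus → MvPolynomial ℕ ℚ) (hS1 : S 1 = 1) : Gsum S 1 = 1 := by
  rw [Gsum, Fset_one, finsum_mem_singleton]
  simp [lenS_one, hS1]

lemma sigma_S (S : SPlus → MvPolynomial ℕ ℚ) (hS : SchubertFamily S) (w : SPlus) (i : ℕ) :
    rename (sp i) (S w) = S w - (X i - X (i + 1)) *
      (if lenS (w * sN i) < lenS w then S (w * sN i) else 0) := by
  have h := hS.2.2 w i
  by_cases hd : lenS (w * sN i) < lenS w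
  · rw [if_pos hd] at h ⊢
    linear_combination h
  · rw [if_neg hd] at h ⊢
    rw [h]; ring

lemma Gsum_homogeneous (S : SPlus → MvPolynomial ℕ ℚ) (hS : SchubertFamily S) (w : SPlus) :
    (Gsum S w).IsHomogeneous (lenS w) := by
  rw [Gsum_eq_sum]
  apply IsHomogeneous.sum
  intro p hp
  rw [Set.Finite.mem_toFinset] at hp
  obtain ⟨h1, h2⟩ := hp
  have e1 : ((-1 : MvPolynomial ℕ ℚ)) ^ lenS p.1 = C ((-1 : ℚ) ^ lenS p.1) := by
    rw [map_pow, map_neg, map_one]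
  rw [e1]
  have h3 : (0 + lenS p.1⁻¹) + lenS p.2 = lenS w := by rw [lenS_inv]; omega
  exact h3 ▸ (((isHomogeneous_C _ _).mul (hS.2.1 p.1⁻¹)).mul (hS.2.1 p.2))

lemma left_desc_factor (w u v : SPlus) (i : ℕ) (hp : w = u * v)
    (hadd : lenS w = lenS u + lenS v) (hd : lenS (u⁻¹ * sN i) < lenS u⁻¹) :
    lenS (sN i * w) < lenS w ∧ lenS u = lenS (sN i * u) + 1 := by
  have h1 : lenS (sN i * u) = lenS (u⁻¹ * sN i) := lenS_sN_mul_eq u i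
  have h2 : lenS u⁻¹ = lenS (u⁻¹ * sN i) + 1 := lenS_of_descent u⁻¹ i hd
  have h3 : lenS u⁻¹ = lenS u := lenS_inv u
  have h4 : sN i * w = (sN i * u) * v := by rw [hp, mul_assoc]
  have h5 : lenS (sN i * w) ≤ lenS (sN i * u) + lenS v := h4 ▸ lenS_mul_le _ _
  constructor <;> omega

lemma right_desc_factor (w u v : SPlus) (i : ℕ) (hp : w = u * v)
    (hadd : lenS w = lenS u + lenS v) (hd : lenS (v * sN i) < lenS v) :
    lenS (w * sN i) < lenS w ∧ lenS v = lenS (v * sN i) + 1 := by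
  have h2 : lenS v = lenS (v * sN i) + 1 := lenS_of_descent v i hd
  have h4 : w * sN i = u * (v * sN i) := by rw [hp, mul_assoc]
  have h5 : lenS (w * sN i) ≤ lenS u + lenS (v * sN i) := h4 ▸ lenS_mul_le _ _
  constructor <;> omega

end SchubAux
namespace SchubAux

open MvPolynomial

open Classical in
lemma Gsum_symm (S : SPlus → MvPolynomial ℕ ℚ) (hS : SchubertFamily S) (n : ℕ) (w : SPlus)
    (hw : lenS w = n) (hw1 : w ≠ 1)
    (ih : ∀ w' : SPlus, lenS w' < n →
      Gsum S w' = if w' = 1 then (1 : MvPolynomial ℕ ℚ) else 0)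
    (i : ℕ) : rename (sp i) (Gsum S w) = Gsum S w := by
  classical
  set dP : MvPolynomial ℕ ℚ := X i - X (i + 1) with hdP
  set F : Finset (SPlus × SPlus) := (Fset_finite w).toFinset with hF
  set f : SPlus × SPlus → MvPolynomial ℕ ℚ :=
    fun p => (-1) ^ lenS p.1 * S p.1⁻¹ * S p.2 with hf
  set A' : SPlus → MvPolynomial ℕ ℚ :=
    fun u => if lenS (u⁻¹ * sN i) < lenS u⁻¹ then S (u⁻¹ * sN i) else 0 with hA
  set B' : SPlus → MvPolynomial ℕ ℚ :=
    fun v => if lenS (v * sN i) < lenS v then S (v * sN i) else 0 with hB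
  set T1 := ∑ p ∈ F, (-1 : MvPolynomial ℕ ℚ) ^ lenS p.1 * A' p.1 * S p.2 with hT1
  set T2 := ∑ p ∈ F, (-1 : MvPolynomial ℕ ℚ) ^ lenS p.1 * S p.1⁻¹ * B' p.2 with hT2
  set T3 := ∑ p ∈ F, (-1 : MvPolynomial ℕ ℚ) ^ lenS p.1 * A' p.1 * B' p.2 with hT3
  have hterm : ∀ p : SPlus × SPlus, rename (sp i) (f p)
      = f p - dP * ((-1) ^ lenS p.1 * A' p.1 * S p.2)
          - dP * ((-1) ^ lenS p.1 * S p.1⁻¹ * B' p.2)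
          + dP ^ 2 * ((-1) ^ lenS p.1 * A' p.1 * B' p.2) := by
    intro p
    have h1 : rename (sp i) ((-1 : MvPolynomial ℕ ℚ) ^ lenS p.1) = (-1) ^ lenS p.1 := by
      rw [map_pow, map_neg, map_one]
    have h2 : rename (sp i) (S p.1⁻¹) = S p.1⁻¹ - dP * A' p.1 := sigma_S S hS p.1⁻¹ i
    have h3 : rename (sp i) (S p.2) = S p.2 - dP * B' p.2 := sigma_S S hS p.2 i
    rw [hf]
    simp only
    rw [map_mul, map_mul, h1, h2, h3]
    ring
  have hkey : rename (sp i) (Gsum S w) = Gsum S w - dP * T1 - dP * T2 + dP ^ 2 * T3 := by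
    have hG : Gsum S w = ∑ p ∈ F, f p := Gsum_eq_sum S w
    rw [hG, map_sum, Finset.sum_congr rfl (fun p _ => hterm p)]
    rw [Finset.sum_add_distrib, Finset.sum_sub_distrib, Finset.sum_sub_distrib,
      ← Finset.mul_sum, ← Finset.mul_sum, ← Finset.mul_sum]
  -- zero claims
  have hT1zero : ¬ lenS (sN i * w) < lenS w → T1 = 0 := by
    intro hDL
    rw [hT1]
    apply Finset.sum_eq_zero
    intro p hp
    rw [hF, Set.Finite.mem_toFinset] at hp
    by_cases hd : lenS (p.1⁻¹ * sN i) < lenS p.1⁻¹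
    · exact absurd (left_desc_factor w p.1 p.2 i hp.1 hp.2 hd).1 hDL
    · rw [hA]; simp only; rw [if_neg hd, mul_zero, zero_mul]
  have hT2zero : ¬ lenS (w * sN i) < lenS w → T2 = 0 := by
    intro hDR
    rw [hT2]
    apply Finset.sum_eq_zero
    intro p hp
    rw [hF, Set.Finite.mem_toFinset] at hp
    by_cases hd : lenS (p.2 * sN i) < lenS p.2
    · exact absurd (right_desc_factor w p.1 p.2 i hp.1 hp.2 hd).1 hDR
    · rw [hB]; simp only; rw [if_neg hd, mul_zero]
  have hT3zero : (¬ lenS (sN i * w) < lenS w) ∨ (¬ lenS (w * sN i) < lenS w) → T3 = 0 := by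
    intro hor
    rw [hT3]
    apply Finset.sum_eq_zero
    intro p hp
    rw [hF, Set.Finite.mem_toFinset] at hp
    by_cases hd1 : lenS (p.1⁻¹ * sN i) < lenS p.1⁻¹
    · by_cases hd2 : lenS (p.2 * sN i) < lenS p.2
      · exfalso
        rcases hor with h | h
        · exact h (left_desc_factor w p.1 p.2 i hp.1 hp.2 hd1).1
        · exact h (right_desc_factor w p.1 p.2 i hp.1 hp.2 hd2).1
      · rw [hB]; simp only; rw [if_neg hd2, mul_zero]
    · rw [hA]; simp only; rw [if_neg hd1, mul_zero, zero_mul]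
  -- value claims
  have hT1val : lenS (sN i * w) < lenS w →
      T1 = -(if sN i * w = 1 then (1 : MvPolynomial ℕ ℚ) else 0) := by
    intro hDL
    have hlsw : lenS w = lenS (sN i * w) + 1 := lenS_of_left_descent w i hDL
    have hstep1 : T1 = ∑ p ∈ F.filter (fun p => lenS (p.1⁻¹ * sN i) < lenS p.1⁻¹),
        (-1 : MvPolynomial ℕ ℚ) ^ lenS p.1 * A' p.1 * S p.2 := by
      rw [hT1]
      refine (Finset.sum_filter_of_ne ?_).symm
      intro p hp hne
      by_contra hd
      apply hne
      rw [hA]; simp only; rw [if_neg hd, mul_zero, zero_mul]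
    have hstep2 : T1 = ∑ p ∈ F.filter (fun p => lenS (p.1⁻¹ * sN i) < lenS p.1⁻¹),
        (-1 : MvPolynomial ℕ ℚ) ^ lenS p.1 * S (p.1⁻¹ * sN i) * S p.2 := by
      rw [hstep1]
      apply Finset.sum_congr rfl
      intro p hp
      rw [Finset.mem_filter] at hp
      rw [hA]; simp only; rw [if_pos hp.2]
    have hstep3 : T1 = ∑ q ∈ (Fset_finite (sN i * w)).toFinset, -(f q) := by
      rw [hstep2]
      refine Finset.sum_bij' (fun p _ => (sN i * p.1, p.2)) (fun q _ => (sN i * q.1, q.2))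
        ?_ ?_ ?_ ?_ ?_
      · -- forward membership
        intro p hp
        rw [Finset.mem_filter, hF, Set.Finite.mem_toFinset] at hp
        obtain ⟨⟨hprod, hadd⟩, hd⟩ := hp
        have hu := (left_desc_factor w p.1 p.2 i hprod hadd hd).2
        rw [Set.Finite.mem_toFinset]
        refine ⟨by rw [hprod, mul_assoc], ?_⟩
        simp only
        omega
      · -- backward membership
        intro q hq
        rw [Set.Finite.mem_toFinset] at hq
        obtain ⟨hprod, hadd⟩ := hq
        have hprod2 : w = (sN i * q.1) * q.2 := by
          have e : w = sN i * (sN i * w) := by rw [← mul_assoc, sN_mul_self, one_mul]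
          rw [e, hprod, mul_assoc]
        have hu : lenS (sN i * q.1) = lenS q.1 + 1 := by
          rcases lenS_sN_mul_dichotomy q.1 i with h1 | h1
          · exact h1
          · exfalso
            have hb : lenS w ≤ lenS (sN i * q.1) + lenS q.2 := hprod2 ▸ lenS_mul_le _ _
            omega
        rw [Finset.mem_filter, hF, Set.Finite.mem_toFinset]
        refine ⟨⟨hprod2, by simp only; omega⟩, ?_⟩
        simp only
        have e2 : (sN i * q.1)⁻¹ * sN i = q.1⁻¹ := by
          rw [mul_inv_rev, sN_inv, mul_assoc, sN_mul_self, mul_one]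
        rw [e2, lenS_inv, lenS_inv]
        omega
      · -- left inverse
        intro p hp
        simp only
        rw [← mul_assoc, sN_mul_self, one_mul]
      · -- right inverse
        intro q hq
        simp only
        rw [← mul_assoc, sN_mul_self, one_mul]
      · -- terms
        intro p hp
        rw [Finset.mem_filter, hF, Set.Finite.mem_toFinset] at hp
        obtain ⟨⟨hprod, hadd⟩, hd⟩ := hp
        have hu := (left_desc_factor w p.1 p.2 i hprod hadd hd).2
        have e1 : (sN i * p.1)⁻¹ = p.1⁻¹ * sN i := by rw [mul_inv_rev, sN_inv]
        rw [hf]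
        simp only
        rw [e1, hu, pow_succ]
        ring
    rw [hstep3, Finset.sum_neg_distrib, ← Gsum_eq_sum S (sN i * w),
      ih (sN i * w) (by omega)]
  have hT2val : lenS (w * sN i) < lenS w →
      T2 = (if w * sN i = 1 then (1 : MvPolynomial ℕ ℚ) else 0) := by
    intro hDR
    have hlsw : lenS w = lenS (w * sN i) + 1 := lenS_of_descent w i hDR
    have hstep1 : T2 = ∑ p ∈ F.filter (fun p => lenS (p.2 * sN i) < lenS p.2),
        (-1 : MvPolynomial ℕ ℚ) ^ lenS p.1 * S p.1⁻¹ * B' p.2 := by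
      rw [hT2]
      refine (Finset.sum_filter_of_ne ?_).symm
      intro p hp hne
      by_contra hd
      apply hne
      rw [hB]; simp only; rw [if_neg hd, mul_zero]
    have hstep2 : T2 = ∑ p ∈ F.filter (fun p => lenS (p.2 * sN i) < lenS p.2),
        (-1 : MvPolynomial ℕ ℚ) ^ lenS p.1 * S p.1⁻¹ * S (p.2 * sN i) := by
      rw [hstep1]
      apply Finset.sum_congr rfl
      intro p hp
      rw [Finset.mem_filter] at hp
      rw [hB]; simp only; rw [if_pos hp.2]
    have hstep3 : T2 = ∑ q ∈ (Fset_finite (w * sN i)).toFinset, f q := by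
      rw [hstep2]
      refine Finset.sum_bij' (fun p _ => (p.1, p.2 * sN i)) (fun q _ => (q.1, q.2 * sN i))
        ?_ ?_ ?_ ?_ ?_
      · intro p hp
        rw [Finset.mem_filter, hF, Set.Finite.mem_toFinset] at hp
        obtain ⟨⟨hprod, hadd⟩, hd⟩ := hp
        have hv := (right_desc_factor w p.1 p.2 i hprod hadd hd).2
        rw [Set.Finite.mem_toFinset]
        refine ⟨by rw [hprod, mul_assoc], ?_⟩
        simp only
        omega
      · intro q hq
        rw [Set.Finite.mem_toFinset] at hq
        obtain ⟨hprod, hadd⟩ := hq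
        have hprod2 : w = q.1 * (q.2 * sN i) := by
          have e : w = (w * sN i) * sN i := by rw [mul_assoc, sN_mul_self, mul_one]
          rw [e, hprod, mul_assoc]
        have hv : lenS (q.2 * sN i) = lenS q.2 + 1 := by
          rcases lenS_mul_sN_dichotomy q.2 i with h1 | h1
          · exact h1
          · exfalso
            have hb : lenS w ≤ lenS q.1 + lenS (q.2 * sN i) := hprod2 ▸ lenS_mul_le _ _
            omega
        rw [Finset.mem_filter, hF, Set.Finite.mem_toFinset]
        refine ⟨⟨hprod2, by simp only; omega⟩, ?_⟩
        simp only
        have e2 : (q.2 * sN i) * sN i = q.2 := by rw [mul_assoc, sN_mul_self, mul_one]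
        rw [e2]
        omega
      · intro p hp
        simp only
        rw [mul_assoc, sN_mul_self, mul_one]
      · intro q hq
        simp only
        rw [mul_assoc, sN_mul_self, mul_one]
      · intro p hp
        rfl
    rw [hstep3, ← Gsum_eq_sum S (w * sN i), ih (w * sN i) (by omega)]
  -- T3 in the double-descent case
  have hT3val : lenS (sN i * w) < lenS w → lenS (w * sN i) < lenS w → T3 = 0 := by
    intro hDL hDR
    by_cases hc : sN i * w = w * sN i
    · -- commuting case: the index set is empty
      rw [hT3]
      apply Finset.sum_eq_zero
      intro p hp
      rw [hF, Set.Finite.mem_toFinset] at hp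
      by_cases hd1 : lenS (p.1⁻¹ * sN i) < lenS p.1⁻¹
      · by_cases hd2 : lenS (p.2 * sN i) < lenS p.2
        · exfalso
          have h1 := (left_desc_factor w p.1 p.2 i hp.1 hp.2 hd1).2
          have h2 := (right_desc_factor w p.1 p.2 i hp.1 hp.2 hd2).2
          have hsws : sN i * w * sN i = w := by
            rw [hc, mul_assoc, sN_mul_self, mul_one]
          have hprod : w = (sN i * p.1) * (p.2 * sN i) := by
            calc w = sN i * w * sN i := hsws.symm
              _ = sN i * (p.1 * p.2) * sN i := by rw [← hp.1]
              _ = (sN i * p.1) * (p.2 * sN i) := by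
                  rw [← mul_assoc (sN i) p.1 p.2, mul_assoc (sN i * p.1) p.2 (sN i)]
          have hb : lenS w ≤ lenS (sN i * p.1) + lenS (p.2 * sN i) :=
            hprod ▸ lenS_mul_le _ _
          have hadd := hp.2
          omega
        · rw [hB]; simp only; rw [if_neg hd2, mul_zero]
      · rw [hA]; simp only; rw [if_neg hd1, mul_zero, zero_mul]
    · -- non-commuting case: reindex to s*w*s
      have hwd : (w : Equiv.Perm ℕ) (i + 1) < (w : Equiv.Perm ℕ) i := (descent_iff w i).mp hDR
      have hrd : lenS ((sN i * w) * sN i) < lenS (sN i * w) := by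
        rw [descent_iff]
        show Equiv.swap i (i+1) ((w : Equiv.Perm ℕ) (i+1))
          < Equiv.swap i (i+1) ((w : Equiv.Perm ℕ) i)
        by_cases hex : (w : Equiv.Perm ℕ) (i+1) = i ∧ (w : Equiv.Perm ℕ) i = i + 1
        · exfalso
          apply hc
          have hsws : sN i * w * sN i = w := by
            apply Subtype.ext; apply Equiv.ext; intro j
            show Equiv.swap i (i+1) ((w : Equiv.Perm ℕ) (Equiv.swap i (i+1) j))
              = (w : Equiv.Perm ℕ) j
            by_cases hj1 : j = i
            · subst hj1
              rw [Equiv.swap_apply_left, hex.1, Equiv.swap_apply_left, hex.2]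
            · by_cases hj2 : j = i + 1
              · subst hj2
                rw [Equiv.swap_apply_right, hex.2, Equiv.swap_apply_right, hex.1]
              · rw [Equiv.swap_apply_of_ne_of_ne hj1 hj2]
                have hni : (w : Equiv.Perm ℕ) j ≠ i := fun h =>
                  hj2 ((w : Equiv.Perm ℕ).injective (by rw [h, hex.1]))
                have hni2 : (w : Equiv.Perm ℕ) j ≠ i + 1 := fun h =>
                  hj1 ((w : Equiv.Perm ℕ).injective (by rw [h, hex.2]))
                exact Equiv.swap_apply_of_ne_of_ne hni hni2
          calc sN i * w = (sN i * w * sN i) * sN i := by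
                rw [mul_assoc, sN_mul_self, mul_one]
            _ = w * sN i := by rw [hsws]
        · exact swap_lt hwd hex
      have hlsw : lenS w = lenS (sN i * w) + 1 := lenS_of_left_descent w i hDL
      have hlen3 : lenS (sN i * w * sN i) + 2 = lenS w := by
        have h2 := lenS_of_descent (sN i * w) i hrd
        omega
      have hwe : w = sN i * (sN i * w * sN i) * sN i := by
        rw [← mul_assoc, ← mul_assoc, sN_mul_self, one_mul, mul_assoc, sN_mul_self, mul_one]
      have hne3 : ¬ (sN i * w * sN i = 1) := by
        intro h
        apply hw1
        rw [hwe, h, mul_one, sN_mul_self]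
      have hstep1 : T3 = ∑ p ∈ F.filter (fun p =>
          lenS (p.1⁻¹ * sN i) < lenS p.1⁻¹ ∧ lenS (p.2 * sN i) < lenS p.2),
          (-1 : MvPolynomial ℕ ℚ) ^ lenS p.1 * A' p.1 * B' p.2 := by
        rw [hT3]
        refine (Finset.sum_filter_of_ne ?_).symm
        intro p hp hne
        constructor
        · by_contra hd
          apply hne
          rw [hA]; simp only; rw [if_neg hd, mul_zero, zero_mul]
        · by_contra hd
          apply hne
          rw [hB]; simp only; rw [if_neg hd, mul_zero]
      have hstep2 : T3 = ∑ p ∈ F.filter (fun p =>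
          lenS (p.1⁻¹ * sN i) < lenS p.1⁻¹ ∧ lenS (p.2 * sN i) < lenS p.2),
          (-1 : MvPolynomial ℕ ℚ) ^ lenS p.1 * S (p.1⁻¹ * sN i) * S (p.2 * sN i) := by
        rw [hstep1]
        apply Finset.sum_congr rfl
        intro p hp
        rw [Finset.mem_filter] at hp
        rw [hA, hB]; simp only; rw [if_pos hp.2.1, if_pos hp.2.2]
      have hstep3 : T3 = ∑ q ∈ (Fset_finite (sN i * w * sN i)).toFinset, -(f q) := by
        rw [hstep2]
        refine Finset.sum_bij' (fun p _ => (sN i * p.1, p.2 * sN i))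
          (fun q _ => (sN i * q.1, q.2 * sN i)) ?_ ?_ ?_ ?_ ?_
        · intro p hp
          rw [Finset.mem_filter, hF, Set.Finite.mem_toFinset] at hp
          obtain ⟨⟨hprod, hadd⟩, hd1, hd2⟩ := hp
          have h1 := (left_desc_factor w p.1 p.2 i hprod hadd hd1).2
          have h2 := (right_desc_factor w p.1 p.2 i hprod hadd hd2).2
          rw [Set.Finite.mem_toFinset]
          constructor
          · rw [hprod, ← mul_assoc (sN i) p.1 p.2, mul_assoc (sN i * p.1) p.2 (sN i)]
          · simp only
            omega
        · intro q hq
          rw [Set.Finite.mem_toFinset] at hq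
          obtain ⟨hprod, hadd⟩ := hq
          have hprod2 : w = (sN i * q.1) * (q.2 * sN i) := by
            calc w = sN i * (sN i * w * sN i) * sN i := hwe
              _ = sN i * (q.1 * q.2) * sN i := by rw [← hprod]
              _ = (sN i * q.1) * (q.2 * sN i) := by
                  rw [← mul_assoc (sN i) q.1 q.2, mul_assoc (sN i * q.1) q.2 (sN i)]
          have hb : lenS w ≤ lenS (sN i * q.1) + lenS (q.2 * sN i) :=
            hprod2 ▸ lenS_mul_le _ _
          have hb1 := lenS_mul_sN_le q.2 i
          have hu : lenS (sN i * q.1) = lenS q.1 + 1 := by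
            rcases lenS_sN_mul_dichotomy q.1 i with h1 | h1
            · exact h1
            · exfalso; omega
          have hv : lenS (q.2 * sN i) = lenS q.2 + 1 := by
            rcases lenS_mul_sN_dichotomy q.2 i with h1 | h1
            · exact h1
            · exfalso; omega
          rw [Finset.mem_filter, hF, Set.Finite.mem_toFinset]
          refine ⟨⟨hprod2, by simp only; omega⟩, ?_, ?_⟩
          · simp only
            have e2 : (sN i * q.1)⁻¹ * sN i = q.1⁻¹ := by
              rw [mul_inv_rev, sN_inv, mul_assoc, sN_mul_self, mul_one]
            rw [e2, lenS_inv, lenS_inv]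
            omega
          · simp only
            have e3 : (q.2 * sN i) * sN i = q.2 := by rw [mul_assoc, sN_mul_self, mul_one]
            rw [e3]
            omega
        · intro p hp
          simp only
          rw [← mul_assoc, sN_mul_self, one_mul, mul_assoc, sN_mul_self, mul_one]
        · intro q hq
          simp only
          rw [← mul_assoc, sN_mul_self, one_mul, mul_assoc, sN_mul_self, mul_one]
        · intro p hp
          rw [Finset.mem_filter, hF, Set.Finite.mem_toFinset] at hp
          obtain ⟨⟨hprod, hadd⟩, hd1, hd2⟩ := hp
          have h1 := (left_desc_factor w p.1 p.2 i hprod hadd hd1).2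
          have e1 : (sN i * p.1)⁻¹ = p.1⁻¹ * sN i := by rw [mul_inv_rev, sN_inv]
          rw [hf]
          simp only
          rw [e1, h1, pow_succ]
          ring
      rw [hstep3, Finset.sum_neg_distrib, ← Gsum_eq_sum S (sN i * w * sN i),
        ih (sN i * w * sN i) (by omega), if_neg hne3, neg_zero]
  -- final assembly
  rw [hkey]
  by_cases hDL : lenS (sN i * w) < lenS w
  · by_cases hDR : lenS (w * sN i) < lenS w
    · rw [hT1val hDL, hT2val hDR, hT3val hDL hDR]
      by_cases hcase : sN i * w = 1
      · have hcase2 : w * sN i = 1 := by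
          have hwv : w = sN i := by
            rw [mul_eq_one_iff_inv_eq, sN_inv] at hcase
            exact hcase.symm
          rw [hwv, sN_mul_self]
        rw [if_pos hcase, if_pos hcase2]
        ring
      · have hcase2 : ¬ (w * sN i = 1) := by
          intro h
          apply hcase
          rw [mul_eq_one_iff_eq_inv, sN_inv] at h
          rw [h, sN_mul_self]
        rw [if_neg hcase, if_neg hcase2]
        ring
    · have h1 : ¬ (sN i * w = 1) := by
        intro h
        apply hDR
        have hwv : w = sN i := by
          rw [mul_eq_one_iff_inv_eq, sN_inv] at h
          exact h.symm
        have h2 : w * sN i = 1 := by rw [hwv, sN_mul_self]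
        rw [h2, lenS_one]
        exact lenS_pos w hw1
      rw [hT1val hDL, hT2zero hDR, hT3zero (Or.inr hDR), if_neg h1]
      ring
  · by_cases hDR : lenS (w * sN i) < lenS w
    · have h1 : ¬ (w * sN i = 1) := by
        intro h
        apply hDL
        have hwv : w = sN i := by rw [mul_eq_one_iff_eq_inv, sN_inv] at h; exact h
        have h2 : sN i * w = 1 := by rw [hwv, sN_mul_self]
        rw [h2, lenS_one]
        exact lenS_pos w hw1
      rw [hT1zero hDL, hT2val hDR, hT3zero (Or.inl hDL), if_neg h1]
      ring
    · rw [hT1zero hDL, hT2zero hDR, hT3zero (Or.inl hDL)]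
      ring


open Classical in
lemma Gsum_eq_delta (S : SPlus → MvPolynomial ℕ ℚ) (hS : SchubertFamily S) :
    ∀ (n : ℕ) (w : SPlus), lenS w = n →
      Gsum S w = if w = 1 then (1 : MvPolynomial ℕ ℚ) else 0 := by
  intro n
  induction n using Nat.strong_induction_on with
  | _ n ihn =>
    intro w hw
    by_cases hw1 : w = 1
    · subst hw1
      rw [if_pos rfl]
      exact Gsum_one S hS.1
    · rw [if_neg hw1]
      have hpos : 0 < lenS w := lenS_pos w hw1
      have ih : ∀ w' : SPlus, lenS w' < n →
          Gsum S w' = if w' = 1 then (1 : MvPolynomial ℕ ℚ) else 0 :=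
        fun w' hw' => ihn (lenS w') (by omega) w' rfl
      exact eq_zero_of_symmetric (Gsum S w) (lenS w) hpos
        (Gsum_homogeneous S hS w)
        (fun j => Gsum_symm S hS n w hw hw1 ih j)

end SchubAux


open Classical in
/-- The Schubert cancellation identity: for `w ∈ S₊`,
`∑_{w ≐ uv} (-1)^{ℓ(u)} 𝔖_{u⁻¹}(a) 𝔖_v(a) = δ_{w,id}`, where the sum is over
length-additive factorizations `w = u v` and both Schubert polynomials are in
the same variables. -/
theorem schubert_cancellation
    (S : SPlus → MvPolynomial ℕ ℚ) (hS : SchubertFamily S) (w : SPlus) :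
    (∑ᶠ p ∈ {p : SPlus × SPlus | w = p.1 * p.2 ∧ lenS w = lenS p.1 + lenS p.2},
        (-1 : MvPolynomial ℕ ℚ) ^ lenS p.1 * S p.1⁻¹ * S p.2)
      = if w = 1 then 1 else 0 := by
  exact SchubAux.Gsum_eq_delta S hS (lenS w) w rfl
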